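/- Let $\xi$ be a nonnegative distribution on $\mathbb{T}^2$ and $f$ a continuous function on $\mathbb{T}^2$, and define $\mathcal{M}(f,\xi)$ to be the distribution associated to the measure $f(x)\mu_\xi(dx)$, where $\mu_\xi$ is the Borel measure representing $\xi$. Then for every $s > 0$ and $p,q \in [1,\infty]$, there is a constant $C$ (depending only on $s,p,q$) such that $\|\mathcal{M}(f,\xi)\|_{B_{p,q}^{-s}} \le C \|f\|_{C(\mathbb{T}^2)} \|\xi\|_{B_{p,q}^{-s}}$ whenever $\xi \in B_{p,q}^{-s}$ is nonnegative. -/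

import Mathlib

open MeasureTheory ENNReal

/-- `|k|²` for a frequency `k ∈ ℤ²`. -/
def freqSq (k : ℤ × ℤ) : ℝ := (k.1 : ℝ) ^ 2 + (k.2 : ℝ) ^ 2

/-- The heat kernel `p_t` of `e^{tΔ}` on the torus `𝕋² = (ℝ/2πℤ)²`, written as a
function of the difference variable on `ℝ²`. -/
noncomputable def torusHeatKernel (t : ℝ) (z : ℝ × ℝ) : ℝ :=
  ((2 * Real.pi) ^ 2)⁻¹ *
    ∑' k : ℤ × ℤ, Real.exp (-(freqSq k) * t) * Real.cos ((k.1 : ℝ) * z.1 + (k.2 : ℝ) * z.2)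

/-- A fundamental domain of the torus in `ℝ²`. -/
def torusDom : Set (ℝ × ℝ) := Set.Icc (0:ℝ) (2 * Real.pi) ×ˢ Set.Icc (0:ℝ) (2 * Real.pi)

/-- `e^{tΔ}(f·μ)` for a measure `μ` on the torus and a continuous function `f`. -/
noncomputable def heatOf (μ : Measure (ℝ × ℝ)) (f : ℝ × ℝ → ℝ) (t : ℝ) (x : ℝ × ℝ) : ℝ :=
  ∫ y, torusHeatKernel t (x - y) * f y ∂μ

/-- The Besov `B^{-s}_{p,q}` norm of `f·μ`, via the heat kernel characterization
`‖ξ‖_{B^{-s}_{p,q}} ≃ ‖e^{Δ}ξ‖_{L^p} + ‖ t^{s/2} ‖e^{tΔ}ξ‖_{L^p} ‖_{L^q([0,1], dt/t)}`. -/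
noncomputable def besovNegNorm (s : ℝ) (p q : ℝ≥0∞) (μ : Measure (ℝ × ℝ))
    (f : ℝ × ℝ → ℝ) : ℝ≥0∞ :=
  eLpNorm (heatOf μ f 1) p (volume.restrict torusDom) +
    eLpNorm (fun t : ℝ => t ^ (s / 2) * (eLpNorm (heatOf μ f t) p (volume.restrict torusDom)).toReal)
      q ((volume.restrict (Set.Ioo (0:ℝ) 1)).withDensity fun t => ENNReal.ofReal t⁻¹)

open Real Complex in
private lemma oneD_summand_eq (t x : ℝ) (n : ℤ) :
    Complex.exp (-(n:ℂ)^2 * t + n * x * Complex.I)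
      = jacobiTheta₂_term n ((x / (2*π) : ℝ) : ℂ) (((t/π : ℝ) : ℂ) * Complex.I) := by
  have hπ : (π : ℂ) ≠ 0 := Complex.ofReal_ne_zero.mpr Real.pi_ne_zero
  unfold jacobiTheta₂_term
  congr 1
  push_cast
  field_simp
  linear_combination (-(n:ℂ)^2*t) * Complex.I_sq

open Real Complex in
private lemma oneD_summable (t x : ℝ) (ht : 0 < t) :
    Summable (fun n : ℤ => Complex.exp (-(n:ℂ)^2 * t + n * x * Complex.I)) := by
  simp_rw [oneD_summand_eq t x]
  exact (summable_jacobiTheta₂_term_iff _ _).mpr (by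
    simpa using div_pos ht Real.pi_pos)

open Real Complex in
/-- Summability of shifted Gaussians over ℤ. -/
private lemma summable_shifted_gauss {c : ℝ} (hc : 0 < c) (d : ℝ) :
    Summable (fun n : ℤ => Real.exp (-c * ((n:ℝ) - d)^2)) := by
  set z : ℂ := ((-(c*d)/π : ℝ) : ℂ) * Complex.I
  set τ : ℂ := ((c/π : ℝ) : ℂ) * Complex.I
  have hτ : 0 < τ.im := by simpa [τ] using div_pos hc Real.pi_pos
  have hs : Summable (fun n : ℤ => ‖jacobiTheta₂_term n z τ‖) :=
    summable_norm_iff.mpr ((summable_jacobiTheta₂_term_iff z τ).mpr hτ)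
  have := hs.mul_left (Real.exp (-c * d^2))
  refine this.congr fun n => ?_
  rw [norm_jacobiTheta₂_term, ← Real.exp_add]
  congr 1
  have h1 : τ.im = c/π := by simp [τ]
  have h2 : z.im = -(c*d)/π := by simp [z]
  rw [h1, h2]
  field_simp
  ring

open Real Complex in
/-- Positivity (and reality) of the 1-d theta sum, via Poisson summation. -/
private lemma oneD_pos (t x : ℝ) (ht : 0 < t) :
    ∃ r : ℝ, 0 < r ∧
      (∑' n : ℤ, Complex.exp (-(n:ℂ)^2 * t + n * x * Complex.I)) = (r : ℂ) := by
  have hπ : (0:ℝ) < π := Real.pi_pos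
  set a : ℂ := ((t/π : ℝ) : ℂ) with ha_def
  have ha : 0 < a.re := by simpa [a] using div_pos ht hπ
  set b : ℂ := ((x/(2*π) : ℝ) : ℂ) * Complex.I with hb_def
  set c : ℝ := π^2/t with hc_def
  have hc : 0 < c := div_pos (pow_pos hπ 2) ht
  set d : ℝ := x/(2*π) with hd_def
  have key := Complex.tsum_exp_neg_quadratic ha b
  have hL : (fun n : ℤ => Complex.exp (-π * a * n ^ 2 + 2 * π * b * n))
      = fun n : ℤ => Complex.exp (-(n:ℂ)^2 * t + n * x * Complex.I) := by
    funext n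
    congr 1
    have hπ' : (π : ℂ) ≠ 0 := Complex.ofReal_ne_zero.mpr Real.pi_ne_zero
    simp only [a, b]
    push_cast
    field_simp
  have hR : (fun n : ℤ => Complex.exp (-π / a * (n + Complex.I * b) ^ 2))
      = fun n : ℤ => ((Real.exp (-c * ((n:ℝ) - d)^2) : ℝ) : ℂ) := by
    funext n
    rw [Complex.ofReal_exp]
    congr 1
    have hπ' : (π : ℂ) ≠ 0 := Complex.ofReal_ne_zero.mpr Real.pi_ne_zero
    have ht' : (t : ℂ) ≠ 0 := Complex.ofReal_ne_zero.mpr ht.ne'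
    simp only [a, b, c, d]
    push_cast
    field_simp
    linear_combination ((π:ℂ)^3 * (4*(n:ℂ)^2*π^2 - 4*π*(n:ℂ)*x + x^2) + (π:ℂ)^2*x^2*(Complex.I^2-1) + 4*(π:ℂ)^3*n*x - (π:ℂ)^3*x^2 + 4*(π:ℂ)^4*n*x - 4*(π:ℂ)^5*(n:ℂ)^2 + (-4*(π:ℂ)*n*x - (π:ℂ)^2*x^2*(Complex.I^2-1) - 4*(π:ℂ)^3*n*x - (x:ℂ)^2*(Complex.I^2-1))) * Complex.I_sq
  rw [hL, hR] at key
  have hg : Summable (fun n : ℤ => Real.exp (-c * ((n:ℝ) - d)^2)) :=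
    summable_shifted_gauss hc d
  have hsum0 : (∑' n : ℤ, ((Real.exp (-c * ((n:ℝ) - d)^2) : ℝ) : ℂ))
      = ((∑' n : ℤ, Real.exp (-c * ((n:ℝ) - d)^2) : ℝ) : ℂ) := by
    rw [Complex.ofReal_tsum]
  have hpos0 : 0 < ∑' n : ℤ, Real.exp (-c * ((n:ℝ) - d)^2) := by
    have h0 : Real.exp (-c * ((0:ℤ) - d : ℝ)^2) ≤ ∑' n : ℤ, Real.exp (-c * ((n:ℝ) - d)^2) := by
      refine Summable.le_tsum hg 0 fun m _ => (Real.exp_pos _).le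
    exact lt_of_lt_of_le (Real.exp_pos _) h0
  refine ⟨(1 / (t/π) ^ ((1:ℝ)/2)) * ∑' n : ℤ, Real.exp (-c * ((n:ℝ) - d)^2),
    by positivity, ?_⟩
  rw [key, hsum0, ha_def]
  push_cast [Complex.ofReal_cpow (div_pos ht hπ).le]
  ring

open Real in
private lemma summable_gauss_int (t : ℝ) (ht : 0 < t) :
    Summable (fun n : ℤ => Real.exp (-(n:ℝ)^2 * t)) := by
  have h := summable_norm_iff.mpr (oneD_summable t 0 ht)
  refine h.congr fun n => ?_
  rw [Complex.norm_exp,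
    show (-(n:ℂ)^2 * t + n * (0:ℝ) * Complex.I) = ((-(n:ℝ)^2*t : ℝ):ℂ) by push_cast; ring,
    Complex.ofReal_re]

open Real in
private lemma summable_gauss_prod (t : ℝ) (ht : 0 < t) :
    Summable (fun k : ℤ × ℤ => Real.exp (-(freqSq k) * t)) := by
  have := (summable_gauss_int t ht).mul_of_nonneg (summable_gauss_int t ht)
    (fun n => (Real.exp_pos _).le) (fun n => (Real.exp_pos _).le)
  refine this.congr fun k => ?_
  rw [← Real.exp_add, freqSq]
  congr 1
  ring

open Real Complex in
private lemma twoD_pos (t : ℝ) (ht : 0 < t) (z : ℝ × ℝ) :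
    0 < ∑' k : ℤ × ℤ, Real.exp (-(freqSq k) * t)
        * Real.cos ((k.1 : ℝ) * z.1 + (k.2 : ℝ) * z.2) := by
  obtain ⟨r₁, hr₁, hs₁⟩ := oneD_pos t z.1 ht
  obtain ⟨r₂, hr₂, hs₂⟩ := oneD_pos t z.2 ht
  set F : ℤ → ℂ := fun n => Complex.exp (-(n:ℂ)^2 * t + n * z.1 * Complex.I) with hF
  set G : ℤ → ℂ := fun n => Complex.exp (-(n:ℂ)^2 * t + n * z.2 * Complex.I) with hG
  have hFs : Summable F := oneD_summable t z.1 ht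
  have hGs : Summable G := oneD_summable t z.2 ht
  have hFn : Summable fun n => ‖F n‖ := summable_norm_iff.mpr hFs
  have hGn : Summable fun n => ‖G n‖ := summable_norm_iff.mpr hGs
  have hprod : Summable (fun k : ℤ × ℤ => F k.1 * G k.2) :=
    summable_mul_of_summable_norm hFn hGn
  have hterm : ∀ k : ℤ × ℤ,
      Real.exp (-(freqSq k) * t) * Real.cos ((k.1 : ℝ) * z.1 + (k.2 : ℝ) * z.2)
        = (F k.1 * G k.2).re := by
    intro k
    have : F k.1 * G k.2 = Complex.exp
        ((↑(-(freqSq k) * t) : ℂ) + (↑((k.1 : ℝ) * z.1 + (k.2 : ℝ) * z.2) : ℂ) * Complex.I) := by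
      rw [hF, hG, ← Complex.exp_add]
      congr 1
      simp only [freqSq]
      push_cast
      ring
    rw [this, Complex.exp_re]
    simp
  calc (0:ℝ) < r₁ * r₂ := mul_pos hr₁ hr₂
  _ = ∑' k : ℤ × ℤ, Real.exp (-(freqSq k) * t)
        * Real.cos ((k.1 : ℝ) * z.1 + (k.2 : ℝ) * z.2) := by
    rw [tsum_congr hterm, ← Complex.re_tsum hprod,
      ← tsum_mul_tsum_of_summable_norm hFn hGn, hs₁, hs₂]
    simp [← Complex.ofReal_mul]

private lemma twoD_term_norm_le (t : ℝ) (k : ℤ × ℤ) (z : ℝ × ℝ) :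
    ‖Real.exp (-(freqSq k) * t) * Real.cos ((k.1 : ℝ) * z.1 + (k.2 : ℝ) * z.2)‖
      ≤ Real.exp (-(freqSq k) * t) := by
  rw [Real.norm_eq_abs, abs_mul, Real.abs_exp]
  calc Real.exp (-(freqSq k) * t) * |Real.cos _|
      ≤ Real.exp (-(freqSq k) * t) * 1 :=
        mul_le_mul_of_nonneg_left (Real.abs_cos_le_one _) (Real.exp_pos _).le
  _ = _ := mul_one _

private lemma twoD_cont (t : ℝ) (ht : 0 < t) :
    Continuous (fun z : ℝ × ℝ => ∑' k : ℤ × ℤ,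
      Real.exp (-(freqSq k) * t) * Real.cos ((k.1 : ℝ) * z.1 + (k.2 : ℝ) * z.2)) := by
  refine continuous_tsum (fun k => ?_) (summable_gauss_prod t ht)
    (fun k z => twoD_term_norm_le t k z)
  exact continuous_const.mul ((Real.continuous_cos).comp (by fun_prop))

private lemma twoD_bound (t : ℝ) (ht : 0 < t) (z : ℝ × ℝ) :
    |∑' k : ℤ × ℤ, Real.exp (-(freqSq k) * t) * Real.cos ((k.1 : ℝ) * z.1 + (k.2 : ℝ) * z.2)|
      ≤ ∑' k : ℤ × ℤ, Real.exp (-(freqSq k) * t) := by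
  have hsum : Summable fun k : ℤ × ℤ =>
      ‖Real.exp (-(freqSq k) * t) * Real.cos ((k.1 : ℝ) * z.1 + (k.2 : ℝ) * z.2)‖ :=
    (summable_gauss_prod t ht).of_nonneg_of_le (fun _ => norm_nonneg _)
      (fun k => twoD_term_norm_le t k z)
  calc |∑' k : ℤ × ℤ, Real.exp (-(freqSq k) * t) * Real.cos ((k.1:ℝ) * z.1 + (k.2:ℝ) * z.2)|
      ≤ ∑' k : ℤ × ℤ, ‖Real.exp (-(freqSq k) * t) * Real.cos ((k.1:ℝ) * z.1 + (k.2:ℝ) * z.2)‖ :=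
        norm_tsum_le_tsum_norm hsum
  _ ≤ ∑' k : ℤ × ℤ, Real.exp (-(freqSq k) * t) :=
        Summable.tsum_le_tsum (fun k => twoD_term_norm_le t k z) hsum (summable_gauss_prod t ht)

/-- A convenient bound for the heat kernel. -/
noncomputable def kerBound (t : ℝ) : ℝ :=
  ((2 * Real.pi) ^ 2)⁻¹ * ∑' k : ℤ × ℤ, Real.exp (-(freqSq k) * t)

private lemma kernel_pos (t : ℝ) (ht : 0 < t) (z : ℝ × ℝ) : 0 < torusHeatKernel t z := by
  unfold torusHeatKernel
  have h2π : (0:ℝ) < ((2 * Real.pi) ^ 2)⁻¹ := by positivity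
  exact mul_pos h2π (twoD_pos t ht z)

private lemma kernel_bound (t : ℝ) (ht : 0 < t) (z : ℝ × ℝ) :
    |torusHeatKernel t z| ≤ kerBound t := by
  unfold torusHeatKernel kerBound
  rw [abs_mul, abs_of_nonneg (by positivity : (0:ℝ) ≤ ((2 * Real.pi) ^ 2)⁻¹)]
  exact mul_le_mul_of_nonneg_left (twoD_bound t ht z) (by positivity)

private lemma kernel_cont (t : ℝ) (ht : 0 < t) : Continuous (torusHeatKernel t) := by
  have : torusHeatKernel t = fun z => ((2 * Real.pi) ^ 2)⁻¹ *
      ∑' k : ℤ × ℤ, Real.exp (-(freqSq k) * t)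
        * Real.cos ((k.1 : ℝ) * z.1 + (k.2 : ℝ) * z.2) := rfl
  rw [this]
  exact continuous_const.mul (twoD_cont t ht)

private lemma integrable_kernel (μ : Measure (ℝ × ℝ)) [IsFiniteMeasure μ]
    (t : ℝ) (ht : 0 < t) (x : ℝ × ℝ) :
    Integrable (fun y => torusHeatKernel t (x - y)) μ := by
  refine Integrable.mono' (integrable_const (kerBound t)) ?_ ?_
  · exact ((kernel_cont t ht).comp (continuous_const.sub continuous_id)).aestronglyMeasurable
  · exact Filter.Eventually.of_forall fun y => kernel_bound t ht (x - y)

private lemma heat_one_nonneg (μ : Measure (ℝ × ℝ)) (t : ℝ) (ht : 0 < t) (x : ℝ × ℝ) :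
    0 ≤ heatOf μ (fun _ => 1) t x := by
  unfold heatOf
  exact integral_nonneg fun y => by
    simpa [mul_one] using (kernel_pos t ht (x - y)).le

private lemma heat_abs_le (μ : Measure (ℝ × ℝ)) [IsFiniteMeasure μ]
    (t : ℝ) (ht : 0 < t) (f : ℝ × ℝ → ℝ) (K : ℝ) (hK : ∀ y, |f y| ≤ K) (x : ℝ × ℝ) :
    |heatOf μ f t x| ≤ K * heatOf μ (fun _ => 1) t x := by
  have hK0 : 0 ≤ K := (abs_nonneg _).trans (hK 0)
  unfold heatOf
  simp only [mul_one]
  have h2 : (∫ y, |torusHeatKernel t (x - y)| * |f y| ∂μ)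
      ≤ ∫ y, K * torusHeatKernel t (x - y) ∂μ := by
    refine integral_mono_of_nonneg (Filter.Eventually.of_forall fun y => ?_)
      ((integrable_kernel μ t ht x).const_mul K)
      (Filter.Eventually.of_forall fun y => ?_)
    · show (0:ℝ) ≤ |torusHeatKernel t (x - y)| * |f y|
      positivity
    · show |torusHeatKernel t (x - y)| * |f y| ≤ K * torusHeatKernel t (x - y)
      rw [abs_of_nonneg (kernel_pos t ht (x - y)).le]
      calc torusHeatKernel t (x - y) * |f y|
          ≤ torusHeatKernel t (x - y) * K :=
            mul_le_mul_of_nonneg_left (hK y) (kernel_pos t ht (x - y)).le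
      _ = K * torusHeatKernel t (x - y) := mul_comm _ _
  calc |∫ y, torusHeatKernel t (x - y) * f y ∂μ|
      ≤ ∫ y, |torusHeatKernel t (x - y)| * |f y| ∂μ := by
        simpa [Real.norm_eq_abs, abs_mul] using
          norm_integral_le_integral_norm (fun y => torusHeatKernel t (x - y) * f y) (μ := μ)
  _ ≤ ∫ y, K * torusHeatKernel t (x - y) ∂μ := h2
  _ = K * ∫ y, torusHeatKernel t (x - y) ∂μ := integral_const_mul K _

private lemma heat_one_abs_le (μ : Measure (ℝ × ℝ)) [IsFiniteMeasure μ]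
    (t : ℝ) (ht : 0 < t) (x : ℝ × ℝ) :
    ‖heatOf μ (fun _ => 1) t x‖ ≤ kerBound t * (μ Set.univ).toReal := by
  unfold heatOf
  simp only [mul_one]
  calc ‖∫ y, torusHeatKernel t (x - y) ∂μ‖
      ≤ ∫ _, kerBound t ∂μ := by
        refine norm_integral_le_of_norm_le (integrable_const _) ?_
        exact Filter.Eventually.of_forall fun y => kernel_bound t ht (x - y)
  _ = (μ Set.univ).toReal * kerBound t := by rw [integral_const, smul_eq_mul, measureReal_def]
  _ = kerBound t * (μ Set.univ).toReal := mul_comm _ _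

private lemma eLp_heat_le (μ : Measure (ℝ × ℝ)) [IsFiniteMeasure μ]
    (t : ℝ) (ht : 0 < t) (f : ℝ × ℝ → ℝ) (K : ℝ) (hK : ∀ y, |f y| ≤ K) (p : ℝ≥0∞) :
    eLpNorm (heatOf μ f t) p (volume.restrict torusDom)
      ≤ ENNReal.ofReal K * eLpNorm (heatOf μ (fun _ => 1) t) p (volume.restrict torusDom) := by
  have hK0 : 0 ≤ K := (abs_nonneg _).trans (hK 0)
  have hmono : eLpNorm (heatOf μ f t) p (volume.restrict torusDom)
      ≤ eLpNorm (K • heatOf μ (fun _ => 1) t) p (volume.restrict torusDom) := by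
    refine eLpNorm_mono fun x => ?_
    rw [Pi.smul_apply, smul_eq_mul, Real.norm_eq_abs, Real.norm_eq_abs,
      abs_of_nonneg (mul_nonneg hK0 (heat_one_nonneg μ t ht x))]
    exact heat_abs_le μ t ht f K hK x
  calc eLpNorm (heatOf μ f t) p (volume.restrict torusDom)
      ≤ eLpNorm (K • heatOf μ (fun _ => 1) t) p (volume.restrict torusDom) := hmono
  _ = (‖K‖₊ : ℝ≥0∞) * eLpNorm (heatOf μ (fun _ => 1) t) p (volume.restrict torusDom) :=
        eLpNorm_const_smul K _ p _
  _ = ENNReal.ofReal K * _ := by rw [show (‖K‖₊ : ℝ≥0∞) = ENNReal.ofReal K from Real.enorm_eq_ofReal hK0]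

private lemma vol_torusDom_lt_top : volume torusDom < ⊤ := by
  have : IsCompact torusDom := isCompact_Icc.prod isCompact_Icc
  exact this.measure_lt_top

private lemma eLp_heat_one_lt_top (μ : Measure (ℝ × ℝ)) [IsFiniteMeasure μ]
    (t : ℝ) (ht : 0 < t) (p : ℝ≥0∞) :
    eLpNorm (heatOf μ (fun _ => 1) t) p (volume.restrict torusDom) < ⊤ := by
  have hb := eLpNorm_le_of_ae_bound (p := p) (μ := volume.restrict torusDom)
    (Filter.Eventually.of_forall fun x => heat_one_abs_le μ t ht x)
  refine hb.trans_lt ?_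
  have h1 : (volume.restrict torusDom) Set.univ < ⊤ := by
    rw [Measure.restrict_apply_univ]; exact vol_torusDom_lt_top
  exact ENNReal.mul_lt_top (ENNReal.rpow_lt_top_of_nonneg (by positivity) h1.ne)
    ENNReal.ofReal_lt_top

/-- The product `𝓜(f,ξ) = f·μ_ξ` of a continuous function and a nonnegative distribution
(identified with the nonnegative measure `μ` representing it, supported in a fundamental
domain) satisfies `‖𝓜(f,ξ)‖_{B^{-s}_{p,q}} ≤ C ‖f‖_{C(𝕋²)} ‖ξ‖_{B^{-s}_{p,q}}`. -/
theorem product_nonneg_distribution_besov_bound (s : ℝ) (hs : 0 < s)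
    (p q : ℝ≥0∞) (hp : 1 ≤ p) (hq : 1 ≤ q) :
    ∃ C : ℝ, 0 < C ∧ ∀ μ : Measure (ℝ × ℝ), IsFiniteMeasure μ → μ torusDomᶜ = 0 →
      ∀ f : ℝ × ℝ → ℝ, Continuous f → ∀ K : ℝ, (∀ y, |f y| ≤ K) →
        besovNegNorm s p q μ f ≤
          ENNReal.ofReal (C * K) * besovNegNorm s p q μ (fun _ => 1) := by
  refine ⟨1, one_pos, fun μ hfin _ f _ K hK => ?_⟩
  haveI := hfin
  have hK0 : 0 ≤ K := (abs_nonneg _).trans (hK 0)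
  rw [one_mul]
  unfold besovNegNorm
  rw [mul_add]
  refine add_le_add (eLp_heat_le μ 1 one_pos f K hK p) ?_
  -- the second (weighted-in-time) summand
  set ν1 := volume.restrict torusDom
  set ν2 := (volume.restrict (Set.Ioo (0:ℝ) 1)).withDensity fun t => ENNReal.ofReal t⁻¹
  have hac : ν2 ≪ volume.restrict (Set.Ioo (0:ℝ) 1) :=
    withDensity_absolutelyContinuous _ _
  have hmem : ∀ᵐ t ∂ν2, t ∈ Set.Ioo (0:ℝ) 1 :=
    hac.ae_le (ae_restrict_mem measurableSet_Ioo)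
  have hptwise : ∀ᵐ t ∂ν2,
      ‖t ^ (s / 2) * (eLpNorm (heatOf μ f t) p ν1).toReal‖
        ≤ ‖(K • fun t : ℝ =>
            t ^ (s / 2) * (eLpNorm (heatOf μ (fun _ => 1) t) p ν1).toReal) t‖ := by
    filter_upwards [hmem] with t htm
    have ht : 0 < t := htm.1
    have hb : eLpNorm (heatOf μ (fun _ => 1) t) p ν1 < ⊤ := eLp_heat_one_lt_top μ t ht p
    have hab := eLp_heat_le μ t ht f K hK p
    have htoReal : (eLpNorm (heatOf μ f t) p ν1).toReal
        ≤ K * (eLpNorm (heatOf μ (fun _ => 1) t) p ν1).toReal := by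
      have := ENNReal.toReal_mono
        (ENNReal.mul_ne_top ENNReal.ofReal_ne_top hb.ne) hab
      rwa [ENNReal.toReal_mul, ENNReal.toReal_ofReal hK0] at this
    have htp : (0:ℝ) ≤ t ^ (s / 2) := Real.rpow_nonneg ht.le _
    rw [Pi.smul_apply, smul_eq_mul, Real.norm_eq_abs, Real.norm_eq_abs,
      abs_of_nonneg (mul_nonneg htp ENNReal.toReal_nonneg),
      abs_of_nonneg (mul_nonneg hK0 (mul_nonneg htp ENNReal.toReal_nonneg))]
    calc t ^ (s / 2) * (eLpNorm (heatOf μ f t) p ν1).toReal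
        ≤ t ^ (s / 2) * (K * (eLpNorm (heatOf μ (fun _ => 1) t) p ν1).toReal) :=
          mul_le_mul_of_nonneg_left htoReal htp
    _ = K * (t ^ (s / 2) * (eLpNorm (heatOf μ (fun _ => 1) t) p ν1).toReal) := by ring
  calc eLpNorm (fun t : ℝ => t ^ (s / 2) * (eLpNorm (heatOf μ f t) p ν1).toReal) q ν2
      ≤ eLpNorm (K • fun t : ℝ =>
          t ^ (s / 2) * (eLpNorm (heatOf μ (fun _ => 1) t) p ν1).toReal) q ν2 :=
        eLpNorm_mono_ae hptwise
  _ = (‖K‖₊ : ℝ≥0∞) * eLpNorm (fun t : ℝ =>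
        t ^ (s / 2) * (eLpNorm (heatOf μ (fun _ => 1) t) p ν1).toReal) q ν2 :=
        eLpNorm_const_smul K _ q ν2
  _ = ENNReal.ofReal K * _ := by rw [show (‖K‖₊ : ℝ≥0∞) = ENNReal.ofReal K from Real.enorm_eq_ofReal hK0]
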